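/- Every traceless n×n real matrix is a sum of at most n²−1 nilpotent matrices. -/

import Mathlib

open Matrix Finset

/-- A rank-one matrix `u vᵀ` with `v ⬝ᵥ u = 0` squares to zero. -/
lemma aux_vecMulVec_sq {n : ℕ} (u v : Fin n → ℝ) (h : v ⬝ᵥ u = 0) :
    IsNilpotent (Matrix.vecMulVec u v) := by
  refine ⟨2, ?_⟩
  ext i j
  have : ∀ x, u i * v x * (u x * v j) = u i * v j * (v x * u x) := fun x => by ring
  simp only [pow_two, Matrix.mul_apply, Matrix.vecMulVec_apply, Matrix.zero_apply]
  simp_rw [this, ← Finset.mul_sum]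
  have h' : ∑ x, v x * u x = 0 := h
  rw [h', mul_zero]

/-- Padding lemma: a sum over a finset of size ≤ m of elements satisfying `P`
can be rewritten as a sum over `Fin m` of elements satisfying `P`. -/
lemma aux_pad {α M : Type*} [AddCommMonoid M] [DecidableEq α] {m : ℕ}
    (t : Finset α) (ht : t.card ≤ m) (f : α → M) (P : M → Prop) (hP0 : P 0)
    (hf : ∀ i ∈ t, P (f i)) :
    ∃ N : Fin m → M, (∀ j, P (N j)) ∧ ∑ i ∈ t, f i = ∑ j, N j := by
  have hcard : Fintype.card (↥t) ≤ Fintype.card (Fin m) := by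
    simpa [Fintype.card_coe] using ht
  obtain ⟨e⟩ := Function.Embedding.nonempty_of_card_le hcard
  refine ⟨fun j => ∑ i ∈ t.attach.filter (fun i => e i = j), f i.1, ?_, ?_⟩
  · intro j
    dsimp only
    by_cases hj : ∃ i : ↥t, e i = j
    · obtain ⟨i, hi⟩ := hj
      have : t.attach.filter (fun i => e i = j) = {i} := by
        ext i'
        simp only [Finset.mem_filter, Finset.mem_attach, true_and, Finset.mem_singleton]
        constructor
        · intro h'; exact e.injective (h'.trans hi.symm)
        · rintro rfl; exact hi
      rw [this, Finset.sum_singleton]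
      exact hf i.1 i.2
    · have : t.attach.filter (fun i => e i = j) = ∅ := by
        ext i'
        simp only [Finset.mem_filter, Finset.mem_attach, true_and, Finset.notMem_empty,
          iff_false]
        exact fun h' => hj ⟨i', h'⟩
      rw [this, Finset.sum_empty]
      exact hP0
  · rw [Finset.sum_fiberwise_of_maps_to (fun i _ => Finset.mem_univ (e i))
      (fun i : ↥t => f i.1), Finset.sum_attach]

/-- Every traceless `n × n` real matrix (`n ≥ 2`) is a sum of at most `n² - 1`
nilpotent matrices. -/
theorem traceless_sum_nilpotent (n : ℕ) (hn : 2 ≤ n)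
    (A : Matrix (Fin n) (Fin n) ℝ) (hA : A.trace = 0) :
    ∃ N : Fin (n ^ 2 - 1) → Matrix (Fin n) (Fin n) ℝ,
      (∀ i, IsNilpotent (N i)) ∧ A = ∑ i, N i := by
  classical
  -- diagonal entries as a function on ℕ
  set d : ℕ → ℝ := fun i => if h : i < n then A ⟨i, h⟩ ⟨i, h⟩ else 0 with hd
  -- partial sums
  set s : ℕ → ℝ := fun k => ∑ i ∈ Finset.range (k + 1), d i with hs
  have hdA : ∀ x : Fin n, d x.val = A x x := by
    intro x; simp [hd, x.isLt]
  have htrace : ∑ i ∈ Finset.range n, d i = 0 := by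
    rw [← Fin.sum_univ_eq_sum_range d n]
    rw [show (∑ i : Fin n, d i.val) = ∑ i : Fin n, A i i from
      Finset.sum_congr rfl fun i _ => hdA i]
    exact hA
  -- the two index maps
  have hlt1 : ∀ k : Fin (n - 1), k.val < n := fun k => by omega
  have hlt2 : ∀ k : Fin (n - 1), k.val + 1 < n := fun k => by
    have := k.isLt; omega
  set a : Fin (n - 1) → Fin n := fun k => ⟨k.val, hlt1 k⟩ with ha
  set b : Fin (n - 1) → Fin n := fun k => ⟨k.val + 1, hlt2 k⟩ with hb
  have hab : ∀ k, a k ≠ b k := by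
    intro k h
    have : k.val = k.val + 1 := congrArg Fin.val h
    omega
  set u : Fin (n - 1) → Fin n → ℝ := fun k x =>
    if x = a k then s k.val else if x = b k then -s k.val else 0 with hu
  set v : Fin (n - 1) → Fin n → ℝ := fun k x =>
    (if x = a k then (1 : ℝ) else 0) + (if x = b k then 1 else 0) with hv
  set M : Fin (n - 1) → Matrix (Fin n) (Fin n) ℝ := fun k =>
    Matrix.vecMulVec (u k) (v k) with hM
  -- nilpotency of M k
  have hMnil : ∀ k, IsNilpotent (M k) := by
    intro k
    apply aux_vecMulVec_sq
    have : ∀ x, v k x * u k x =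
        (if x = a k then u k x else 0) + (if x = b k then u k x else 0) := by
      intro x
      by_cases h1 : x = a k
      · have h2 : x ≠ b k := fun h => hab k (h1 ▸ h)
        simp [hu, hv, h1, h2, hab k]
      · by_cases h2 : x = b k <;> simp [hu, hv, h1, h2, Ne.symm (hab k)]
    simp only [dotProduct, this, Finset.sum_add_distrib, Finset.sum_ite_eq',
      Finset.mem_univ, if_true]
    simp [hu, hab k, (hab k).symm]
  -- diagonal entries of M k
  have hMdiag : ∀ k (x : Fin n), M k x x =
      (if x.val = k.val then s k.val else 0) +
      (if x.val = k.val + 1 then -s k.val else 0) := by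
    intro k x
    have hxa : (x = a k) ↔ x.val = k.val := by
      rw [Fin.ext_iff]
    have hxb : (x = b k) ↔ x.val = k.val + 1 := by
      rw [Fin.ext_iff]
    simp only [hM, Matrix.vecMulVec_apply, hu, hv]
    by_cases h1 : (x:ℕ) = (k:ℕ)
    · have hx1 : x = a k := hxa.mpr h1
      have hx2 : x ≠ b k := fun h => hab k (hx1 ▸ h)
      have h2 : ¬((x:ℕ) = (k:ℕ) + 1) := by omega
      rw [if_pos h1, if_neg h2, if_pos hx1]
      have : v k x = 1 := by simp [hv, hx1, hx2, hab k]
      simp only [hv] at this ⊢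
      rw [if_pos hx1, if_neg hx2]
      ring
    · by_cases h2 : (x:ℕ) = (k:ℕ) + 1
      · have hx2 : x = b k := hxb.mpr h2
        have hx1 : x ≠ a k := fun h => h1 (hxa.mp h)
        rw [if_neg h1, if_pos h2, if_neg hx1, if_pos hx2]
        rw [if_neg hx1, if_pos hx2]
        ring
      · have hx1 : x ≠ a k := fun h => h1 (hxa.mp h)
        have hx2 : x ≠ b k := fun h => h2 (hxb.mp h)
        rw [if_neg h1, if_neg h2, if_neg hx1, if_neg hx2]
        rw [if_neg hx1, if_neg hx2]
        ring
  -- the sum of the M k has the same diagonal as A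
  have hdiagsum : ∀ x : Fin n, (∑ k, M k) x x = A x x := by
    intro x
    rw [Matrix.sum_apply]
    have step : (∑ k : Fin (n-1), M k x x) = ∑ m ∈ Finset.range (n-1),
        ((if x.val = m then s m else 0) + (if x.val = m + 1 then -s m else 0)) := by
      rw [← Fin.sum_univ_eq_sum_range
        (fun m => ((if x.val = m then s m else 0) + (if x.val = m + 1 then -s m else 0)))]
      exact Finset.sum_congr rfl fun k _ => hMdiag k x
    rw [step, Finset.sum_add_distrib]
    have h1 : (∑ m ∈ Finset.range (n-1), if x.val = m then s m else 0) =
        if x.val ∈ Finset.range (n-1) then s x.val else 0 := Finset.sum_ite_eq _ _ _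
    rcases Nat.eq_zero_or_eq_succ_pred x.val with hx0 | hxw
    · -- x.val = 0
      have h2 : (∑ m ∈ Finset.range (n-1), if x.val = m + 1 then -s m else 0) = 0 := by
        apply Finset.sum_eq_zero
        intro m _
        rw [if_neg]; omega
      rw [h1, h2, if_pos (Finset.mem_range.mpr (by omega)), hx0, add_zero, ← hdA x, hx0]
      simp [hs]
    · -- x.val = w + 1
      set w := x.val - 1 with hwdef
      have hxval : x.val = w + 1 := hxw
      have h2 : (∑ m ∈ Finset.range (n-1), if x.val = m + 1 then -s m else 0) =
          if w ∈ Finset.range (n-1) then -s w else 0 := by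
        rw [← Finset.sum_ite_eq (Finset.range (n-1)) w (fun m => -s m)]
        apply Finset.sum_congr rfl
        intro m _
        congr 1
        rw [hxval]
        exact propext ⟨fun h => by omega, fun h => by omega⟩
      rw [h1, h2]
      have hwmem : w ∈ Finset.range (n-1) := by
        have hxlt := x.isLt
        rw [Finset.mem_range]
        omega
      rw [if_pos hwmem]
      by_cases hlast : x.val < n - 1
      · rw [if_pos (Finset.mem_range.mpr hlast)]
        have hss : s x.val = s w + d x.val := by
          rw [hs]
          simp only []
          rw [show x.val + 1 = (w + 1) + 1 by omega, Finset.sum_range_succ]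
          rw [show w + 1 = x.val from hxval.symm]
        rw [hss, ← hdA x]
        ring
      · -- x.val = n - 1
        have hxlt := x.isLt
        have hxn : x.val = n - 1 := by omega
        rw [if_neg (by rw [Finset.mem_range]; omega)]
        have hweq : w + 1 = n - 1 := by omega
        have hsw : s w = ∑ i ∈ Finset.range (n - 1), d i := by
          rw [hs]
          simp only []
          rw [hweq]
        have hr : (∑ i ∈ Finset.range (n - 1), d i) + d (n - 1) = 0 := by
          rw [← Finset.sum_range_succ, show n - 1 + 1 = n by omega]
          exact htrace
        rw [← hdA x, hxn, hsw]
        linarith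
  -- the remainder
  set R : Matrix (Fin n) (Fin n) ℝ := A - ∑ k, M k with hR
  have hRdiag : ∀ x, R x x = 0 := by
    intro x
    simp [hR, Matrix.sub_apply, hdiagsum x]
  -- off-diagonal pieces
  have hoffsum : (∑ p ∈ (Finset.univ : Finset (Fin n)).offDiag,
      Matrix.single p.1 p.2 (R p.1 p.2)) = R := by
    rw [Finset.sum_subset (fun p _ => Finset.mem_product.mpr ⟨Finset.mem_univ _, Finset.mem_univ _⟩)]
    · rw [Finset.sum_product]
      exact (Matrix.matrix_eq_sum_single R).symm
    · intro p hp hnp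
      have hpd : p.1 = p.2 := by
        simp only [Finset.mem_offDiag, Finset.mem_univ, true_and] at hnp
        by_contra h
        exact hnp h
      rw [← hpd, hRdiag p.1, Matrix.single_zero]
  -- assemble the index finset
  set t : Finset ((Fin n × Fin n) ⊕ Fin (n - 1)) :=
    (Finset.univ : Finset (Fin n)).offDiag.disjSum Finset.univ with htdef
  set f : (Fin n × Fin n) ⊕ Fin (n - 1) → Matrix (Fin n) (Fin n) ℝ :=
    Sum.elim (fun p => Matrix.single p.1 p.2 (R p.1 p.2)) M with hf
  have hsumf : ∑ x ∈ t, f x = A := by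
    rw [htdef, hf, Finset.sum_sumElim, hoffsum, hR]
    abel
  have hcard : t.card ≤ n ^ 2 - 1 := by
    rw [htdef, Finset.card_disjSum, Finset.offDiag_card]
    simp only [Finset.card_univ, Fintype.card_fin]
    have h1 : n ^ 2 = n * n := by ring
    have h2 : n ≤ n * n := Nat.le_mul_of_pos_left n (by omega)
    rw [h1]
    omega
  have hfnil : ∀ x ∈ t, IsNilpotent (f x) := by
    rintro (⟨i, j⟩ | k) hx
    · rw [htdef, Finset.inl_mem_disjSum, Finset.mem_offDiag] at hx
      refine ⟨2, ?_⟩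
      rw [pow_two]
      simp only [hf, Sum.elim_inl]
      simp [Ne.symm hx.2.2]
    · exact hMnil k
  obtain ⟨N, hN1, hN2⟩ := aux_pad t hcard f IsNilpotent (by exact ⟨1, by simp⟩) hfnil
  exact ⟨N, hN1, by rw [← hN2, hsumf]⟩
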